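/- Let c₁, c₂, c₃, c₄ > 0. There is a constant K = K(c₁,c₂,c₃,c₄) such that: if 1 ≤ a < b ≤ 2a, f : [a,b] → ℝ is twice continuously differentiable, and λ₁ > 0 satisfies c₁λ₁ ≤ |f′(x)| ≤ c₂λ₁ and c₃λ₁ a^{−1} ≤ |f″(x)| ≤ c₄λ₁ a^{−1} for all x ∈ [a,b], then |Σ_{a < n ≤ b} e(f(n))| ≤ K (a^{1/2} λ₁^{1/2} + λ₁^{−1}), where n runs over integers. If in addition c₂λ₁ ≤ 1/2, then |Σ_{a < n ≤ b} e(f(n))| ≤ K λ₁^{−1}. -/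

import Mathlib

/-- `e(x) = exp(2πix)`. -/
noncomputable def eexp (x : ℝ) : ℂ := Complex.exp (2 * Real.pi * Complex.I * x)

open Real Set Finset

lemma eexp_add (x y : ℝ) : eexp (x + y) = eexp x * eexp y := by
  unfold eexp
  rw [← Complex.exp_add]
  congr 1
  push_cast
  ring

lemma norm_eexp (x : ℝ) : ‖eexp x‖ = 1 := by
  unfold eexp
  rw [Complex.norm_exp]
  have : (2 * (Real.pi:ℂ) * Complex.I * x).re = 0 := by
    simp [Complex.mul_re, Complex.mul_im]
  rw [this, Real.exp_zero]

lemma eexp_int (m : ℤ) : eexp m = 1 := by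
  unfold eexp
  have : 2 * (Real.pi:ℂ) * Complex.I * (m:ℝ) = (m:ℤ) * (2 * Real.pi * Complex.I) := by
    push_cast; ring
  rw [this, Complex.exp_int_mul_two_pi_mul_I]

lemma eexp_sub_int (x : ℝ) (m : ℤ) : eexp (x - m) = eexp x := by
  have := eexp_add (x - m) m
  rw [sub_add_cancel] at this
  rw [eexp_int] at this
  rw [mul_one] at this
  exact this.symm

lemma sin_lower {δ θ : ℝ} (hδ : 0 < δ) (h1 : δ ≤ θ) (h2 : θ ≤ 1 - δ) :
    2 * δ ≤ Real.sin (π * θ) := by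
  have hδ2 : δ ≤ 1/2 := by linarith
  rcases le_or_gt θ (1/2) with h | h
  · have := Real.mul_le_sin (x := π * θ) (by nlinarith [Real.pi_pos]) (by nlinarith [Real.pi_pos])
    have hπ : (0:ℝ) < π := Real.pi_pos
    calc 2 * δ ≤ 2 * θ := by linarith
    _ = 2 / π * (π * θ) := by field_simp
    _ ≤ Real.sin (π * θ) := this
  · have hre : π * θ = π - π * (1 - θ) := by ring
    rw [hre, Real.sin_pi_sub]
    have := Real.mul_le_sin (x := π * (1 - θ)) (by nlinarith [Real.pi_pos]) (by nlinarith [Real.pi_pos])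
    have hπ : (0:ℝ) < π := Real.pi_pos
    calc 2 * δ ≤ 2 * (1 - θ) := by linarith
    _ = 2 / π * (π * (1 - θ)) := by field_simp
    _ ≤ _ := this

lemma sin_pos' {θ : ℝ} (h1 : 0 < θ) (h2 : θ < 1) : 0 < Real.sin (π * θ) :=
  Real.sin_pos_of_pos_of_lt_pi (by positivity) (by nlinarith [Real.pi_pos])

lemma inv_eexp_sub_one {θ : ℝ} (h1 : 0 < θ) (h2 : θ < 1) :
    (eexp θ - 1)⁻¹ = -(1/2 : ℂ) - (Real.cos (π*θ) / (2 * Real.sin (π*θ)) : ℝ) * Complex.I := by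
  have hs : 0 < Real.sin (π*θ) := sin_pos' h1 h2
  set s := Real.sin (π*θ) with hs_def
  set c := Real.cos (π*θ) with hc_def
  have hsne : (s:ℂ) ≠ 0 := by exact_mod_cast hs.ne'
  have hI : (Complex.I)^2 = -1 := Complex.I_sq
  have hscC : (s:ℂ)^2 + (c:ℂ)^2 = 1 := by exact_mod_cast Real.sin_sq_add_cos_sq (π*θ)
  have hfac : eexp θ - 1 = Complex.exp (((π*θ : ℝ):ℂ) * Complex.I) * (2 * (s:ℂ) * Complex.I) := by
    have hsplit : eexp θ = Complex.exp (((π*θ:ℝ):ℂ) * Complex.I) * Complex.exp (((π*θ:ℝ):ℂ) * Complex.I) := by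
      unfold eexp
      rw [← Complex.exp_add]
      congr 1
      push_cast
      ring
    have hcs : Complex.exp (((π*θ:ℝ):ℂ) * Complex.I) = (c:ℂ) + (s:ℂ) * Complex.I := by
      rw [Complex.exp_mul_I]
      rw [← Complex.ofReal_cos, ← Complex.ofReal_sin]
    rw [hsplit, hcs]
    linear_combination (-(s:ℂ)^2) * hI + hscC
  rw [hfac, mul_inv]
  have hexpinv : (Complex.exp (((π*θ:ℝ):ℂ) * Complex.I))⁻¹ = (c:ℂ) - (s:ℂ) * Complex.I := by
    rw [← Complex.exp_neg]
    have : -(((π*θ:ℝ):ℂ) * Complex.I) = ((-(π*θ):ℝ):ℂ) * Complex.I := by push_cast; ring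
    rw [this, Complex.exp_mul_I, ← Complex.ofReal_cos, ← Complex.ofReal_sin,
      Real.cos_neg, Real.sin_neg, Complex.ofReal_neg]
    ring
  have hmulinv : ((2:ℂ) * (s:ℂ) * Complex.I)⁻¹ = -Complex.I / (2 * (s:ℂ)) := by
    apply inv_eq_of_mul_eq_one_left
    field_simp
    linear_combination (-1:ℂ) * hI
  rw [hexpinv, hmulinv]
  field_simp
  have hcs : ((c / (2*s) : ℝ):ℂ) * (2 * (s:ℂ)) = c := by
    push_cast; exact div_mul_cancel₀ _ (mul_ne_zero two_ne_zero hsne)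
  linear_combination (s:ℂ) * hI + Complex.I * hcs

lemma cot_anti {θ₁ θ₂ : ℝ} (h0 : 0 < θ₁) (h12 : θ₁ ≤ θ₂) (h1 : θ₂ < 1) :
    Real.cos (π*θ₂) / Real.sin (π*θ₂) ≤ Real.cos (π*θ₁) / Real.sin (π*θ₁) := by
  have hs1 : 0 < Real.sin (π*θ₁) := sin_pos' h0 (lt_of_le_of_lt h12 h1)
  have hs2 : 0 < Real.sin (π*θ₂) := sin_pos' (lt_of_lt_of_le h0 h12) h1
  rw [div_le_div_iff₀ hs2 hs1]
  have hge : 0 ≤ Real.sin (π*θ₂ - π*θ₁) :=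
    Real.sin_nonneg_of_nonneg_of_le_pi (by nlinarith [Real.pi_pos]) (by nlinarith [Real.pi_pos])
  rw [Real.sin_sub] at hge
  nlinarith

lemma cot_bound {δ θ : ℝ} (hδ : 0 < δ) (h1 : δ ≤ θ) (h2 : θ ≤ 1 - δ) :
    |Real.cos (π*θ) / Real.sin (π*θ)| ≤ 1/(2*δ) := by
  have hs := sin_lower hδ h1 h2
  have hspos : 0 < Real.sin (π*θ) := lt_of_lt_of_le (by positivity) hs
  rw [abs_div, abs_of_pos hspos, div_le_div_iff₀ hspos (by positivity)]
  nlinarith [Real.abs_cos_le_one (π*θ), abs_nonneg (Real.cos (π*θ))]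

lemma eexp_ne_one {θ : ℝ} (h1 : 0 < θ) (h2 : θ < 1) : eexp θ ≠ 1 := by
  unfold eexp
  intro hone
  rw [Complex.exp_eq_one_iff] at hone
  obtain ⟨n, hn⟩ := hone
  have h2pi : (2 * (Real.pi:ℂ) * Complex.I) ≠ 0 := by
    simp [Complex.I_ne_zero, Real.pi_ne_zero]
  have : (θ:ℂ) = (n:ℂ) := by
    have h' : (θ:ℂ) * (2 * (Real.pi:ℂ) * Complex.I) = (n:ℂ) * (2 * (Real.pi:ℂ) * Complex.I) := by
      rw [← hn]; ring
    exact mul_right_cancel₀ h2pi h'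
  have hθn : θ = (n:ℝ) := by exact_mod_cast this
  rcases le_or_gt n 0 with h | h
  · have : (n:ℝ) ≤ 0 := by exact_mod_cast h
    linarith [hθn ▸ h1]
  · have : (1:ℝ) ≤ (n:ℝ) := by exact_mod_cast h
    linarith [hθn ▸ h2]

lemma telescope_mono (c : ℕ → ℝ) (m : ℕ) : ∀ M, m ≤ M →
    (∀ i j, m ≤ i → i ≤ j → j ≤ M → c i ≤ c j) →
    ∑ n ∈ Finset.Ioc m M, |c (n-1) - c n| = c M - c m := by
  intro M
  induction M with
  | zero => intro h _; interval_cases m; simp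
  | succ M ih =>
    intro hm hmono
    rcases Nat.lt_or_ge m (M+1) with h | h
    · have hmM : m ≤ M := by omega
      rw [Finset.sum_Ioc_succ_top hmM]
      rw [ih hmM (fun i j hi hij hj => hmono i j hi hij (by omega))]
      have h1 : c M ≤ c (M+1) := hmono M (M+1) hmM (by omega) le_rfl
      have h2 : |c ((M+1)-1) - c (M+1)| = c (M+1) - c M := by
        simp only [Nat.add_sub_cancel]
        rw [abs_sub_comm, abs_of_nonneg (by linarith)]
      rw [h2]; ring
    · have : m = M + 1 := by omega
      subst this; simp

lemma telescope_abs (c : ℕ → ℝ) (m M : ℕ) (hm : m ≤ M)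
    (hmono : (∀ i j, m ≤ i → i ≤ j → j ≤ M → c i ≤ c j) ∨
      (∀ i j, m ≤ i → i ≤ j → j ≤ M → c j ≤ c i)) :
    ∑ n ∈ Finset.Ioc m M, |c (n-1) - c n| ≤ |c m| + |c M| := by
  rcases hmono with h | h
  · rw [telescope_mono c m M hm h]
    calc c M - c m ≤ |c M| + |c m| := by
          have := le_abs_self (c M); have := neg_abs_le (c m); linarith
    _ = |c m| + |c M| := by ring
  · have := telescope_mono (fun n => -c n) m M hm (fun i j hi hij hj => by
      simp only [neg_le_neg_iff]; exact h i j hi hij hj)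
    have heq : ∑ n ∈ Finset.Ioc m M, |c (n-1) - c n|
        = ∑ n ∈ Finset.Ioc m M, |(fun n => -c n) (n-1) - (fun n => -c n) n| := by
      apply Finset.sum_congr rfl; intro n _
      simp only []
      rw [show -c (n-1) - -c n = -(c (n-1) - c n) by ring, abs_neg]
    rw [heq, this]
    have := le_abs_self (c m); have := neg_abs_le (c M); linarith

lemma abel_identity (A w : ℕ → ℂ) (P : ℕ) : ∀ d : ℕ,
    (∀ n, P+1 ≤ n → n ≤ P+1+d → A n = (A (n+1) - A n) * w n) →
    ∑ n ∈ Finset.Ioc P (P+2+d), A n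
      = -(A (P+1) * w (P+1)) + (∑ n ∈ Finset.Ioc (P+1) (P+1+d), A n * (w (n-1) - w n))
        + A (P+2+d) * (1 + w (P+1+d)) := by
  intro d
  induction d with
  | zero =>
    intro hw
    have h1 : P + 2 + 0 = (P+1) + 1 := by omega
    rw [h1]
    rw [Finset.sum_Ioc_succ_top (by omega : P ≤ P+1)]
    rw [show Finset.Ioc (P+1) (P+1+0) = ∅ by simp]
    rw [show Finset.Ioc P (P+1) = {P+1} by rw [← Finset.Icc_add_one_left_eq_Ioc, Finset.Icc_self]]
    have := hw (P+1) (by omega) (by omega)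
    simp only [Finset.sum_singleton, Finset.sum_empty]
    rw [show P+1+0 = P+1 by omega]
    linear_combination this
  | succ d ih =>
    intro hw
    have hIH := ih (fun n hn hn' => hw n hn (by omega))
    have hw2 := hw (P+2+d) (by omega) (by omega)
    have e1 : P + 2 + (d+1) = (P+2+d) + 1 := by omega
    have e2 : P + 1 + (d+1) = (P+1+d) + 1 := by omega
    rw [e1, e2]
    rw [Finset.sum_Ioc_succ_top (by omega : P ≤ P+2+d)]
    rw [Finset.sum_Ioc_succ_top (by omega : P+1 ≤ P+1+d)]
    simp only [Nat.add_sub_cancel]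
    rw [show P+1+d+1 = P+2+d by omega]
    linear_combination hIH + hw2

lemma kusmin_landau (g g' : ℝ → ℝ) (P Q : ℕ) (δ : ℝ) (hδ : 0 < δ) (hδ2 : δ ≤ 1/2)
    (hder : ∀ x ∈ Set.Icc ((P:ℝ)+1) (Q:ℝ), HasDerivAt g (g' x) x)
    (hrange : ∀ x ∈ Set.Icc ((P:ℝ)+1) (Q:ℝ), δ ≤ g' x ∧ g' x ≤ 1 - δ)
    (hmono : MonotoneOn g' (Set.Icc ((P:ℝ)+1) (Q:ℝ)) ∨ AntitoneOn g' (Set.Icc ((P:ℝ)+1) (Q:ℝ))) :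
    ‖∑ n ∈ Finset.Ioc P Q, eexp (g n)‖ ≤ 2 + 1/δ := by
  have hδinv : (0:ℝ) < 1/δ := by positivity
  rcases le_or_gt Q P with hQP | hPQ
  · rw [Finset.Ioc_eq_empty (by omega)]
    simp only [Finset.sum_empty, norm_zero]
    linarith
  rcases eq_or_lt_of_le (Nat.succ_le_of_lt hPQ) with hQ1 | hQ2
  · -- Q = P + 1, single term
    rw [← hQ1, show Finset.Ioc P (P+1) = {P+1} by rw [← Finset.Icc_add_one_left_eq_Ioc, Finset.Icc_self]]
    rw [Finset.sum_singleton, norm_eexp]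
    linarith
  -- Q ≥ P + 2
  obtain ⟨d, hd⟩ : ∃ d, Q = P + 2 + d := ⟨Q - P - 2, by omega⟩
  subst hd
  set Q := P + 2 + d with hQdef
  -- basic inclusion facts
  have hPQr : ((P:ℝ)+1) ≤ (Q:ℝ) := by
    have : P + 1 ≤ Q := by omega
    exact_mod_cast this
  set φ : ℕ → ℝ := fun n => g ((n:ℝ)+1) - g n with hφdef
  set cφ : ℕ → ℝ := fun n => Real.cos (π * φ n) / Real.sin (π * φ n) with hcφdef
  set A : ℕ → ℂ := fun n => eexp (g n) with hAdef
  set w : ℕ → ℂ := fun n => (eexp (φ n) - 1)⁻¹ with hwdef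
  have hMVT : ∀ n : ℕ, P+1 ≤ n → n ≤ P+1+d →
      ∃ ξ : ℝ, (n:ℝ) < ξ ∧ ξ < (n:ℝ)+1 ∧ ξ ∈ Set.Icc ((P:ℝ)+1) (Q:ℝ) ∧ g' ξ = φ n := by
    intro n hn hn'
    have hsub : Set.Icc (n:ℝ) ((n:ℝ)+1) ⊆ Set.Icc ((P:ℝ)+1) (Q:ℝ) := by
      apply Set.Icc_subset_Icc
      · exact_mod_cast hn
      · have h1 : n + 1 ≤ Q := by omega
        have : ((n+1 : ℕ):ℝ) ≤ (Q:ℝ) := by exact_mod_cast h1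
        push_cast at this
        linarith
    have hcont : ContinuousOn g (Set.Icc (n:ℝ) ((n:ℝ)+1)) := fun x hx =>
      ((hder x (hsub hx)).continuousAt).continuousWithinAt
    have hderiv : ∀ x ∈ Set.Ioo (n:ℝ) ((n:ℝ)+1), HasDerivAt g (g' x) x := fun x hx =>
      hder x (hsub (Set.Ioo_subset_Icc_self hx))
    obtain ⟨ξ, hξ, hval⟩ := exists_hasDerivAt_eq_slope g g'
      (by linarith : (n:ℝ) < (n:ℝ)+1) hcont hderiv
    refine ⟨ξ, hξ.1, hξ.2, hsub (Set.Ioo_subset_Icc_self hξ), ?_⟩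
    rw [hval]
    rw [show (n:ℝ)+1 - n = 1 by ring, div_one]
  have hφr : ∀ n : ℕ, P+1 ≤ n → n ≤ P+1+d → δ ≤ φ n ∧ φ n ≤ 1 - δ := by
    intro n hn hn'
    obtain ⟨ξ, _, _, hmem, hval⟩ := hMVT n hn hn'
    rw [← hval]
    exact hrange ξ hmem
  have hφ01 : ∀ n : ℕ, P+1 ≤ n → n ≤ P+1+d → 0 < φ n ∧ φ n < 1 := by
    intro n hn hn'
    obtain ⟨h1, h2⟩ := hφr n hn hn'
    exact ⟨lt_of_lt_of_le hδ h1, lt_of_le_of_lt h2 (by linarith)⟩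
  have hw_eq : ∀ n : ℕ, P+1 ≤ n → n ≤ P+1+d →
      w n = -(1/2:ℂ) - ((cφ n / 2 : ℝ) : ℂ) * Complex.I := by
    intro n hn hn'
    obtain ⟨h1, h2⟩ := hφ01 n hn hn'
    rw [hwdef]
    simp only []
    rw [inv_eexp_sub_one h1 h2]
    congr 2
    rw [hcφdef]
    simp only []
    ring
  have hcot : ∀ n : ℕ, P+1 ≤ n → n ≤ P+1+d → |cφ n| ≤ 1/(2*δ) := by
    intro n hn hn'
    obtain ⟨h1, h2⟩ := hφr n hn hn'
    exact cot_bound hδ h1 h2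
  have hwnorm : ∀ n : ℕ, P+1 ≤ n → n ≤ P+1+d → ‖w n‖ ≤ 1/2 + 1/(4*δ) := by
    intro n hn hn'
    rw [hw_eq n hn hn']
    calc ‖-(1/2:ℂ) - ((cφ n / 2 : ℝ) : ℂ) * Complex.I‖
        ≤ ‖-(1/2:ℂ)‖ + ‖((cφ n / 2 : ℝ) : ℂ) * Complex.I‖ := norm_sub_le _ _
    _ = 1/2 + |cφ n| / 2 := by
        rw [norm_mul, Complex.norm_real, Complex.norm_I, mul_one, norm_neg]
        simp [abs_div]
    _ ≤ 1/2 + (1/(2*δ))/2 := by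
        have := hcot n hn hn'
        linarith
    _ = 1/2 + 1/(4*δ) := by ring
  have hA : ∀ n : ℕ, P+1 ≤ n → n ≤ P+1+d → A n = (A (n+1) - A n) * w n := by
    intro n hn hn'
    obtain ⟨h1, h2⟩ := hφ01 n hn hn'
    have hne : eexp (φ n) - 1 ≠ 0 := sub_ne_zero.mpr (eexp_ne_one h1 h2)
    have hstep : A (n+1) = A n * eexp (φ n) := by
      rw [hAdef]
      simp only []
      rw [← eexp_add]
      congr 1
      rw [hφdef]
      simp only []
      push_cast
      ring
    rw [hstep, hwdef]
    simp only []
    rw [show (A n * eexp (φ n) - A n) * (eexp (φ n) - 1)⁻¹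
        = A n * ((eexp (φ n) - 1) * (eexp (φ n) - 1)⁻¹) by ring,
      mul_inv_cancel₀ hne, mul_one]
  have hcφmono : (∀ i j, P+1 ≤ i → i ≤ j → j ≤ P+1+d → cφ i ≤ cφ j) ∨
      (∀ i j, P+1 ≤ i → i ≤ j → j ≤ P+1+d → cφ j ≤ cφ i) := by
    have key : ∀ i j, P+1 ≤ i → i < j → j ≤ P+1+d →
        (MonotoneOn g' (Set.Icc ((P:ℝ)+1) (Q:ℝ)) → φ i ≤ φ j) ∧
        (AntitoneOn g' (Set.Icc ((P:ℝ)+1) (Q:ℝ)) → φ j ≤ φ i) := by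
      intro i j hi hij hj
      obtain ⟨ξi, hi1, hi2, hims, hiv⟩ := hMVT i hi (by omega)
      obtain ⟨ξj, hj1, hj2, hjms, hjv⟩ := hMVT j (by omega) hj
      have hξ : ξi ≤ ξj := by
        have : ((i+1:ℕ):ℝ) ≤ (j:ℝ) := by exact_mod_cast hij
        push_cast at this
        linarith
      constructor
      · intro hm; rw [← hiv, ← hjv]; exact hm hims hjms hξ
      · intro hm; rw [← hiv, ← hjv]; exact hm hims hjms hξ
    rcases hmono with hm | hm
    · right
      intro i j hi hij hj
      rcases eq_or_lt_of_le hij with rfl | hlt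
      · exact le_rfl
      have hφij : φ i ≤ φ j := (key i j hi hlt hj).1 hm
      have h1 := hφ01 i hi (by omega)
      have h2 := hφ01 j (by omega) hj
      exact cot_anti h1.1 hφij h2.2
    · left
      intro i j hi hij hj
      rcases eq_or_lt_of_le hij with rfl | hlt
      · exact le_rfl
      have hφij : φ j ≤ φ i := (key i j hi hlt hj).2 hm
      have h1 := hφ01 i hi (by omega)
      have h2 := hφ01 j (by omega) hj
      exact cot_anti h2.1 hφij h1.2
  have hid := abel_identity A w P d hA
  rw [show Q = P + 2 + d from rfl]
  rw [hid]
  have hn1 : ‖A (P+1) * w (P+1)‖ ≤ 1/2 + 1/(4*δ) := by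
    rw [norm_mul, hAdef]
    simp only []
    rw [norm_eexp, one_mul]
    exact hwnorm (P+1) le_rfl (by omega)
  have hn3 : ‖A (P+2+d) * (1 + w (P+1+d))‖ ≤ 1 + (1/2 + 1/(4*δ)) := by
    rw [norm_mul, hAdef]
    simp only []
    rw [norm_eexp, one_mul]
    calc ‖1 + w (P+1+d)‖ ≤ ‖(1:ℂ)‖ + ‖w (P+1+d)‖ := norm_add_le _ _
    _ ≤ 1 + (1/2 + 1/(4*δ)) := by
        rw [norm_one]
        have := hwnorm (P+1+d) (by omega) le_rfl
        linarith
  have hmid : ‖∑ n ∈ Finset.Ioc (P+1) (P+1+d), A n * (w (n-1) - w n)‖ ≤ 1/(2*δ) := by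
    calc ‖∑ n ∈ Finset.Ioc (P+1) (P+1+d), A n * (w (n-1) - w n)‖
        ≤ ∑ n ∈ Finset.Ioc (P+1) (P+1+d), ‖A n * (w (n-1) - w n)‖ := norm_sum_le _ _
    _ = ∑ n ∈ Finset.Ioc (P+1) (P+1+d), (1/2) * |cφ (n-1) - cφ n| := by
        apply Finset.sum_congr rfl
        intro n hn
        rw [Finset.mem_Ioc] at hn
        rw [norm_mul, hAdef]
        simp only []
        rw [norm_eexp, one_mul]
        rw [hw_eq (n-1) (by omega) (by omega), hw_eq n (by omega) hn.2]
        rw [show -(1/2:ℂ) - ((cφ (n-1) / 2 : ℝ) : ℂ) * Complex.I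
            - (-(1/2:ℂ) - ((cφ n / 2 : ℝ) : ℂ) * Complex.I)
            = (((cφ n / 2 : ℝ) : ℂ) - ((cφ (n-1) / 2 : ℝ) : ℂ)) * Complex.I by ring]
        rw [norm_mul, Complex.norm_I, mul_one, ← Complex.ofReal_sub, Complex.norm_real]
        rw [Real.norm_eq_abs]
        rw [show cφ n / 2 - cφ (n-1) / 2 = -((cφ (n-1) - cφ n)/2) by ring, abs_neg, abs_div]
        simp [abs_of_nonneg]
        ring
    _ = (1/2) * ∑ n ∈ Finset.Ioc (P+1) (P+1+d), |cφ (n-1) - cφ n| := by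
        rw [Finset.mul_sum]
    _ ≤ (1/2) * (|cφ (P+1)| + |cφ (P+1+d)|) := by
        apply mul_le_mul_of_nonneg_left _ (by norm_num)
        exact telescope_abs cφ (P+1) (P+1+d) (by omega) hcφmono
    _ ≤ (1/2) * (1/(2*δ) + 1/(2*δ)) := by
        have h1 := hcot (P+1) le_rfl (by omega)
        have h2 := hcot (P+1+d) (by omega) le_rfl
        apply mul_le_mul_of_nonneg_left _ (by norm_num)
        linarith
    _ = 1/(2*δ) := by ring
  calc ‖-(A (P+1) * w (P+1)) + (∑ n ∈ Finset.Ioc (P+1) (P+1+d), A n * (w (n-1) - w n))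
        + A (P+2+d) * (1 + w (P+1+d))‖
      ≤ ‖-(A (P+1) * w (P+1)) + (∑ n ∈ Finset.Ioc (P+1) (P+1+d), A n * (w (n-1) - w n))‖
        + ‖A (P+2+d) * (1 + w (P+1+d))‖ := norm_add_le _ _
  _ ≤ ‖-(A (P+1) * w (P+1))‖ + ‖∑ n ∈ Finset.Ioc (P+1) (P+1+d), A n * (w (n-1) - w n)‖
        + ‖A (P+2+d) * (1 + w (P+1+d))‖ := by
      have := norm_add_le (-(A (P+1) * w (P+1)))
        (∑ n ∈ Finset.Ioc (P+1) (P+1+d), A n * (w (n-1) - w n))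
      linarith
  _ ≤ (1/2 + 1/(4*δ)) + 1/(2*δ) + (1 + (1/2 + 1/(4*δ))) := by
      rw [norm_neg]
      have := hn1; have := hmid; have := hn3
      linarith
  _ = 2 + 1/δ := by field_simp; ring

lemma eexp_sub_nat (x : ℝ) (m : ℕ) : eexp (x - m) = eexp x := by
  have := eexp_sub_int x (m:ℤ)
  simpa using this

lemma triv_bound (f : ℝ → ℝ) (s : Finset ℕ) :
    ‖∑ n ∈ s, eexp (f n)‖ ≤ s.card := by
  calc ‖∑ n ∈ s, eexp (f n)‖ ≤ ∑ n ∈ s, ‖eexp (f n)‖ := norm_sum_le _ _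
  _ = ∑ n ∈ s, 1 := by apply Finset.sum_congr rfl; intro n _; rw [norm_eexp]
  _ = s.card := by simp

lemma ordconn_rep (s : Finset ℕ) (h0 : ∀ n ∈ s, 1 ≤ n)
    (hconn : ∀ i j l : ℕ, i ∈ s → l ∈ s → i ≤ j → j ≤ l → j ∈ s) :
    ∃ P Q : ℕ, s = Finset.Ioc P Q ∧ (s.Nonempty → P + 1 ∈ s ∧ Q ∈ s ∧ P < Q) := by
  rcases s.eq_empty_or_nonempty with rfl | hne
  · exact ⟨0, 0, by simp, by rintro ⟨x, hx⟩; simp at hx⟩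
  have hmin1 : 1 ≤ s.min' hne := h0 _ (s.min'_mem hne)
  refine ⟨s.min' hne - 1, s.max' hne, ?_, ?_⟩
  · ext n
    rw [Finset.mem_Ioc]
    constructor
    · intro hn
      exact ⟨by have := s.min'_le n hn; omega, s.le_max' n hn⟩
    · rintro ⟨h1, h2⟩
      exact hconn (s.min' hne) n (s.max' hne) (s.min'_mem hne) (s.max'_mem hne) (by omega) h2
  · intro _
    have h1 : s.min' hne - 1 + 1 = s.min' hne := by omega
    rw [h1]
    refine ⟨s.min'_mem hne, s.max'_mem hne, ?_⟩
    have := s.min'_le _ (s.max'_mem hne)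
    omega

lemma sign_const (g : ℝ → ℝ) (a b : ℝ) (hc : ContinuousOn g (Set.Icc a b))
    (hne : ∀ x ∈ Set.Icc a b, g x ≠ 0) :
    (∀ x ∈ Set.Icc a b, 0 < g x) ∨ (∀ x ∈ Set.Icc a b, g x < 0) := by
  by_contra h
  push_neg at h
  obtain ⟨⟨u, hu, hu'⟩, ⟨v, hv, hv'⟩⟩ := h
  have hgu : g u ≤ 0 := hu'
  have hgv : 0 ≤ g v := hv'
  have hgu' : g u < 0 := lt_of_le_of_ne hgu (hne u hu)
  have hgv' : 0 < g v := lt_of_le_of_ne hgv (Ne.symm (hne v hv))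
  rcases le_total u v with h' | h'
  · have hmem : (0:ℝ) ∈ Set.Icc (g u) (g v) := ⟨le_of_lt hgu', le_of_lt hgv'⟩
    obtain ⟨x, hx, hx0⟩ := intermediate_value_Icc h'
      (hc.mono (Set.Icc_subset_Icc hu.1 hv.2)) hmem
    exact hne x ⟨le_trans hu.1 hx.1, le_trans hx.2 hv.2⟩ hx0
  · have hmem : (0:ℝ) ∈ Set.Icc (g u) (g v) := ⟨le_of_lt hgu', le_of_lt hgv'⟩
    obtain ⟨x, hx, hx0⟩ := intermediate_value_Icc' h'
      (hc.mono (Set.Icc_subset_Icc hv.1 hu.2)) hmem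
    exact hne x ⟨le_trans hv.1 hx.1, le_trans hx.2 hu.2⟩ hx0

lemma mono_of_deriv (f' f'' : ℝ → ℝ) (a b : ℝ)
    (hder : ∀ x ∈ Set.Icc a b, HasDerivAt f' (f'' x) x)
    (hsign : (∀ x ∈ Set.Icc a b, 0 < f'' x) ∨ (∀ x ∈ Set.Icc a b, f'' x < 0)) :
    MonotoneOn f' (Set.Icc a b) ∨ AntitoneOn f' (Set.Icc a b) := by
  have hcont : ContinuousOn f' (Set.Icc a b) := fun x hx =>
    ((hder x hx).continuousAt).continuousWithinAt
  rcases hsign with h | h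
  · left
    apply StrictMonoOn.monotoneOn
    apply strictMonoOn_of_deriv_pos (convex_Icc a b) hcont
    intro x hx
    rw [interior_Icc] at hx
    rw [(hder x (Set.Ioo_subset_Icc_self hx)).deriv]
    exact h x (Set.Ioo_subset_Icc_self hx)
  · right
    apply StrictAntiOn.antitoneOn
    apply strictAntiOn_of_deriv_neg (convex_Icc a b) hcont
    intro x hx
    rw [interior_Icc] at hx
    rw [(hder x (Set.Ioo_subset_Icc_self hx)).deriv]
    exact h x (Set.Ioo_subset_Icc_self hx)

lemma deriv_gap (f' f'' : ℝ → ℝ) (a b m : ℝ)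
    (hder : ∀ x ∈ Set.Icc a b, HasDerivAt f' (f'' x) x)
    (hm : ∀ x ∈ Set.Icc a b, m ≤ |f'' x|) :
    ∀ x ∈ Set.Icc a b, ∀ y ∈ Set.Icc a b, x ≤ y → m * (y - x) ≤ |f' y - f' x| := by
  intro x hx y hy hxy
  rcases eq_or_lt_of_le hxy with rfl | hlt
  · simp
  have hsub : Set.Icc x y ⊆ Set.Icc a b := Set.Icc_subset_Icc hx.1 hy.2
  have hcont : ContinuousOn f' (Set.Icc x y) := fun z hz =>
    ((hder z (hsub hz)).continuousAt).continuousWithinAt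
  obtain ⟨ξ, hξ, hval⟩ := exists_hasDerivAt_eq_slope f' f'' hlt hcont
    (fun z hz => hder z (hsub (Set.Ioo_subset_Icc_self hz)))
  have heq : f' y - f' x = f'' ξ * (y - x) := by
    rw [hval, div_mul_cancel₀]
    exact sub_ne_zero.mpr (by linarith)
  rw [heq, abs_mul, abs_of_pos (by linarith : (0:ℝ) < y - x)]
  exact mul_le_mul_of_nonneg_right (hm ξ (hsub (Set.Ioo_subset_Icc_self hξ))) (by linarith)

lemma sandwich (f' : ℝ → ℝ) (a b : ℝ)
    (hmono : MonotoneOn f' (Set.Icc a b) ∨ AntitoneOn f' (Set.Icc a b))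
    {p q L U : ℝ} (hp : p ∈ Set.Icc a b) (hq : q ∈ Set.Icc a b)
    (h1 : L ≤ f' p) (h2 : f' p ≤ U) (h3 : L ≤ f' q) (h4 : f' q ≤ U) :
    ∀ x ∈ Set.Icc p q, L ≤ f' x ∧ f' x ≤ U := by
  intro x hx
  have hxm : x ∈ Set.Icc a b := ⟨le_trans hp.1 hx.1, le_trans hx.2 hq.2⟩
  rcases hmono with hm | hm
  · exact ⟨le_trans h1 (hm hp hxm hx.1), le_trans (hm hxm hq hx.2) h4⟩
  · exact ⟨le_trans h3 (hm hxm hq hx.2), le_trans (hm hp hxm hx.1) h2⟩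

lemma kl_piece (a b : ℝ) (f f' : ℝ → ℝ) (N M : ℕ) (haN : a < N+1) (hMb : (M:ℝ) ≤ b)
    (hdf : ∀ x ∈ Set.Icc a b, HasDerivAt f (f' x) x)
    (hmono : MonotoneOn f' (Set.Icc a b) ∨ AntitoneOn f' (Set.Icc a b))
    (hmemIcc : ∀ n : ℕ, n ∈ Finset.Ioc N M → (n:ℝ) ∈ Set.Icc a b)
    (s : Finset ℕ) (hs : s ⊆ Finset.Ioc N M)
    (hconn : ∀ i j l : ℕ, i ∈ s → l ∈ s → i ≤ j → j ≤ l → j ∈ s)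
    (δ : ℝ) (hδ : 0 < δ) (hδ2 : δ ≤ 1/2) (m : ℕ)
    (hcond : ∀ n ∈ s, (m:ℝ) + δ ≤ f' n ∧ f' n ≤ (m:ℝ) + 1 - δ) :
    ‖∑ n ∈ s, eexp (f n)‖ ≤ 2 + 1/δ := by
  obtain ⟨P, Q, hrep, hne⟩ := ordconn_rep s
    (fun n hn => by have := hs hn; rw [Finset.mem_Ioc] at this; omega) hconn
  rcases s.eq_empty_or_nonempty with rfl | hsne
  · simp only [Finset.sum_empty, norm_zero]
    positivity
  obtain ⟨hP1, hQ, hPQ⟩ := hne hsne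
  have hP1' := hs hP1
  have hQ' := hs hQ
  rw [Finset.mem_Ioc] at hP1' hQ'
  have hsubPQ : Set.Icc ((P:ℝ)+1) (Q:ℝ) ⊆ Set.Icc a b := by
    intro x hx
    constructor
    · have h1 : (N:ℝ) ≤ (P:ℝ) := by exact_mod_cast (by omega : N ≤ P)
      linarith [hx.1]
    · have h2 : (Q:ℝ) ≤ (M:ℝ) := by exact_mod_cast hQ'.2
      linarith [hx.2]
  have hder : ∀ x ∈ Set.Icc ((P:ℝ)+1) (Q:ℝ),
      HasDerivAt (fun x => f x - (m:ℝ)*x) (f' x - (m:ℝ)) x := by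
    intro x hx
    have h := (hdf x (hsubPQ hx)).sub (((hasDerivAt_id x).const_mul ((m:ℝ))))
    simp only [mul_one] at h
    exact h
  have hPmem : ((P:ℝ)+1) ∈ Set.Icc a b := by
    have := hmemIcc (P+1) (hs hP1)
    push_cast at this
    exact this
  have hQmem : ((Q:ℝ)) ∈ Set.Icc a b := hmemIcc Q (hs hQ)
  have hcondP := hcond (P+1) hP1
  have hcondQ := hcond Q hQ
  have hcastP : ((P+1:ℕ):ℝ) = (P:ℝ)+1 := by push_cast; ring
  rw [hcastP] at hcondP
  have hsand := sandwich f' a b hmono hPmem hQmem hcondP.1 hcondP.2 hcondQ.1 hcondQ.2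
  have hrange : ∀ x ∈ Set.Icc ((P:ℝ)+1) (Q:ℝ), δ ≤ f' x - (m:ℝ) ∧ f' x - (m:ℝ) ≤ 1 - δ := by
    intro x hx
    have := hsand x hx
    exact ⟨by linarith [this.1], by linarith [this.2]⟩
  have hmono' : MonotoneOn (fun x => f' x - (m:ℝ)) (Set.Icc ((P:ℝ)+1) (Q:ℝ)) ∨
      AntitoneOn (fun x => f' x - (m:ℝ)) (Set.Icc ((P:ℝ)+1) (Q:ℝ)) := by
    rcases hmono with hm | hm
    · left; intro x hx y hy hxy
      have := hm (hsubPQ hx) (hsubPQ hy) hxy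
      simp only []
      linarith
    · right; intro x hx y hy hxy
      have := hm (hsubPQ hx) (hsubPQ hy) hxy
      simp only []
      linarith
  have hKL := kusmin_landau (fun x => f x - (m:ℝ)*x) (fun x => f' x - (m:ℝ)) P Q δ hδ hδ2
    hder hrange hmono'
  rw [hrep]
  have hEq : ∑ n ∈ Finset.Ioc P Q, eexp (f n - (m:ℝ)*n) = ∑ n ∈ Finset.Ioc P Q, eexp (f n) := by
    apply Finset.sum_congr rfl
    intro n _
    rw [show (m:ℝ)*(n:ℝ) = ((m*n:ℕ):ℝ) by push_cast; ring]
    exact eexp_sub_nat _ _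
  rw [← hEq]
  simpa using hKL

lemma mid_piece (a b : ℝ) (f' f'' : ℝ → ℝ) (N M : ℕ)
    (hdf' : ∀ x ∈ Set.Icc a b, HasDerivAt f' (f'' x) x)
    (m₀ : ℝ) (hm₀ : 0 < m₀) (hf'' : ∀ x ∈ Set.Icc a b, m₀ ≤ |f'' x|)
    (hmemIcc : ∀ n : ℕ, n ∈ Finset.Ioc N M → (n:ℝ) ∈ Set.Icc a b)
    (s : Finset ℕ) (hs : s ⊆ Finset.Ioc N M)
    (hconn : ∀ i j l : ℕ, i ∈ s → l ∈ s → i ≤ j → j ≤ l → j ∈ s)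
    (r δ : ℝ) (hδ : 0 < δ)
    (hcond : ∀ n ∈ s, r - δ < f' n ∧ f' n < r + δ) :
    (s.card : ℝ) ≤ 2*δ/m₀ + 1 := by
  obtain ⟨P, Q, hrep, hne⟩ := ordconn_rep s
    (fun n hn => by have := hs hn; rw [Finset.mem_Ioc] at this; omega) hconn
  rcases s.eq_empty_or_nonempty with rfl | hsne
  · simp only [Finset.card_empty, Nat.cast_zero]
    positivity
  obtain ⟨hP1, hQ, hPQ⟩ := hne hsne
  have hPmem : ((P:ℝ)+1) ∈ Set.Icc a b := by
    have := hmemIcc (P+1) (hs hP1)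
    push_cast at this
    exact this
  have hQmem : ((Q:ℝ)) ∈ Set.Icc a b := hmemIcc Q (hs hQ)
  have hcondP := hcond (P+1) hP1
  have hcondQ := hcond Q hQ
  have hcastP : ((P+1:ℕ):ℝ) = (P:ℝ)+1 := by push_cast; ring
  rw [hcastP] at hcondP
  have hPQr : (P:ℝ)+1 ≤ (Q:ℝ) := by
    have : ((P+1:ℕ):ℝ) ≤ (Q:ℝ) := by exact_mod_cast hPQ
    push_cast at this
    linarith
  have hgap := deriv_gap f' f'' a b m₀ hdf' hf'' ((P:ℝ)+1) hPmem (Q:ℝ) hQmem hPQr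
  have habs : |f' (Q:ℝ) - f' ((P:ℝ)+1)| < 2*δ := by
    rw [abs_lt]
    constructor <;> [linarith [hcondP.2, hcondQ.1]; linarith [hcondP.1, hcondQ.2]]
  have hlen : (Q:ℝ) - ((P:ℝ)+1) ≤ 2*δ/m₀ := by
    rw [le_div_iff₀ hm₀]
    nlinarith [hgap, habs]
  rw [hrep, Nat.card_Ioc]
  have hcast : ((Q - P:ℕ):ℝ) = (Q:ℝ) - (P:ℝ) := by
    have : P ≤ Q := by omega
    push_cast [this]
    ring
  rw [hcast]
  linarith

set_option maxHeartbeats 2000000 in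
lemma main_pos (c₁ c₂ c₃ : ℝ) (hc₁ : 0 < c₁) (hc₂ : 0 < c₂) (hc₃ : 0 < c₃)
    (a b : ℝ) (f f' f'' : ℝ → ℝ) (lam : ℝ)
    (ha : 1 ≤ a) (hab : a < b) (hb2 : b ≤ 2 * a) (hlam : 0 < lam)
    (hdf : ∀ x ∈ Set.Icc a b, HasDerivAt f (f' x) x)
    (hdf' : ∀ x ∈ Set.Icc a b, HasDerivAt f' (f'' x) x)
    (hf''c : ContinuousOn f'' (Set.Icc a b))
    (hf'pos : ∀ x ∈ Set.Icc a b, 0 < f' x)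
    (hf'b : ∀ x ∈ Set.Icc a b, c₁ * lam ≤ f' x ∧ f' x ≤ c₂ * lam)
    (hf''b : ∀ x ∈ Set.Icc a b, c₃ * lam / a ≤ |f'' x|) :
    (‖∑ n ∈ Finset.Ioc ⌊a⌋₊ ⌊b⌋₊, eexp (f n)‖ ≤
      (40 * (1 + c₂ + c₂/c₃ + 1/c₁ + 1/c₂)) * (Real.sqrt a * Real.sqrt lam + lam⁻¹)) ∧
    (c₂ * lam ≤ 1/2 → ‖∑ n ∈ Finset.Ioc ⌊a⌋₊ ⌊b⌋₊, eexp (f n)‖ ≤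
      (40 * (1 + c₂ + c₂/c₃ + 1/c₁ + 1/c₂)) * lam⁻¹) := by
  have ha0 : (0:ℝ) < a := by linarith
  set K : ℝ := 40 * (1 + c₂ + c₂/c₃ + 1/c₁ + 1/c₂) with hKdef
  have hKpos : 0 < K := by positivity
  set N := ⌊a⌋₊ with hNdef
  set M := ⌊b⌋₊ with hMdef
  have haN : a < N + 1 := Nat.lt_floor_add_one a
  have hNa : (N:ℝ) ≤ a := Nat.floor_le ha0.le
  have hMb : (M:ℝ) ≤ b := Nat.floor_le (by linarith)
  have hN1 : 1 ≤ N := by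
    rw [hNdef]
    exact Nat.one_le_floor_iff _ |>.mpr ha
  have hc12 : c₁ ≤ c₂ := by
    have h := hf'b a ⟨le_rfl, hab.le⟩
    nlinarith [h.1, h.2]
  have hmemIcc : ∀ n : ℕ, n ∈ Finset.Ioc N M → (n:ℝ) ∈ Set.Icc a b := by
    intro n hn
    rw [Finset.mem_Ioc] at hn
    constructor
    · have : ((N+1:ℕ):ℝ) ≤ (n:ℝ) := by exact_mod_cast hn.1
      push_cast at this
      linarith
    · have : (n:ℝ) ≤ (M:ℝ) := by exact_mod_cast hn.2
      linarith
  have hsub : Set.Icc ((N:ℝ)+1) (M:ℝ) ⊆ Set.Icc a b := by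
    intro x hx
    exact ⟨by linarith [hx.1], by linarith [hx.2]⟩
  have hsignf'' : (∀ x ∈ Set.Icc a b, 0 < f'' x) ∨ (∀ x ∈ Set.Icc a b, f'' x < 0) := by
    apply sign_const f'' a b hf''c
    intro x hx h0
    have := hf''b x hx
    rw [h0] at this
    simp only [abs_zero] at this
    have : (0:ℝ) < c₃ * lam / a := by positivity
    linarith
  have hmono := mono_of_deriv f' f'' a b hdf' hsignf''
  -- Kusmin–Landau on the whole range, when c₂ lam ≤ 1/2
  have hsmall : c₂ * lam ≤ 1/2 → ‖∑ n ∈ Finset.Ioc N M, eexp (f n)‖ ≤ 2 + 1/(c₁*lam) := by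
    intro hsm
    have hcl : 0 < c₁ * lam := by positivity
    have hcl2 : c₁ * lam ≤ 1/2 := by nlinarith
    apply kusmin_landau f f' N M (c₁*lam) hcl hcl2
    · intro x hx; exact hdf x (hsub hx)
    · intro x hx
      have h := hf'b x (hsub hx)
      exact ⟨h.1, by nlinarith [h.2]⟩
    · rcases hmono with hm | hm
      · left; exact hm.mono hsub
      · right; exact hm.mono hsub
  -- trivial bound
  have htriv : ‖∑ n ∈ Finset.Ioc N M, eexp (f n)‖ ≤ 2*a := by
    rcases le_or_gt M N with hMN | hNM
    · rw [Finset.Ioc_eq_empty (by omega)]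
      simp only [Finset.sum_empty, norm_zero]
      linarith
    · have h := triv_bound f (Finset.Ioc N M)
      rw [Nat.card_Ioc] at h
      have hcast : ((M - N : ℕ):ℝ) = (M:ℝ) - (N:ℝ) := by
        have : N ≤ M := le_of_lt hNM
        push_cast [this]
        ring
      rw [hcast] at h
      have : (M:ℝ) - (N:ℝ) ≤ b - (a - 1) := by linarith
      linarith
  -- splitting bound
  have hsplit : 1/2 < c₂ * lam → lam ≤ a →
      ‖∑ n ∈ Finset.Ioc N M, eexp (f n)‖ ≤ (36*c₂ + 4*c₂/c₃) * (Real.sqrt a * Real.sqrt lam) := by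
    intro hbig hla
    set u := Real.sqrt lam with hudef
    set v := Real.sqrt a with hvdef
    have hu : 0 < u := Real.sqrt_pos.mpr hlam
    have hv : 0 < v := Real.sqrt_pos.mpr ha0
    have hu2 : u^2 = lam := Real.sq_sqrt hlam.le
    have hv2 : v^2 = a := Real.sq_sqrt ha0.le
    have huv : u ≤ v := Real.sqrt_le_sqrt hla
    set δ : ℝ := u / (2*v) with hδdef
    have hδ : 0 < δ := by positivity
    have hδ2 : δ ≤ 1/2 := by
      rw [hδdef, div_le_iff₀ (by positivity)]
      linarith
    set key : ℕ → ℕ := fun n => ⌊f' n + 1/2⌋₊ with hkeydef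
    set K₀ := ⌊c₂ * lam + 1/2⌋₊ with hK₀def
    have hmaps : ∀ n ∈ Finset.Ioc N M, key n ∈ Finset.range (K₀+1) := by
      intro n hn
      rw [Finset.mem_range, Nat.lt_succ_iff]
      apply Nat.floor_le_floor
      have := hf'b n (hmemIcc n hn)
      linarith [this.2]
    have hdecomp := Finset.sum_fiberwise_of_maps_to hmaps (fun n => eexp (f n))
    set m₀ : ℝ := c₃ * lam / a with hm₀def
    have hm₀ : 0 < m₀ := by positivity
    set B : ℝ := 5 + 2/δ + 2*δ/m₀ with hBdef
    have hfiber : ∀ k ∈ Finset.range (K₀+1),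
        ‖∑ n ∈ (Finset.Ioc N M).filter (fun n => key n = k), eexp (f n)‖ ≤ B := by
      intro k _
      set t := (Finset.Ioc N M).filter (fun n => key n = k) with htdef
      have hts : t ⊆ Finset.Ioc N M := Finset.filter_subset _ _
      have hchar : ∀ n ∈ t, (k:ℝ) - 1/2 ≤ f' n ∧ f' n < (k:ℝ) + 1/2 := by
        intro n hn
        rw [htdef, Finset.mem_filter] at hn
        have hpos := hf'pos n (hmemIcc n hn.1)
        have hfl := (Nat.floor_eq_iff (by linarith : (0:ℝ) ≤ f' n + 1/2)).mp hn.2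
        constructor
        · linarith [hfl.1]
        · have := hfl.2
          push_cast at this
          linarith
      -- split t into three parts
      set p : ℕ → Prop := fun n => f' n ≤ (k:ℝ) - δ with hpdef
      set q : ℕ → Prop := fun n => (k:ℝ) + δ ≤ f' n with hqdef
      have hsum3 : ∑ n ∈ t, eexp (f n) =
          (∑ n ∈ t.filter p, eexp (f n)) +
          ((∑ n ∈ (t.filter (fun n => ¬ p n)).filter q, eexp (f n)) +
           (∑ n ∈ (t.filter (fun n => ¬ p n)).filter (fun n => ¬ q n), eexp (f n))) := by
        rw [Finset.sum_filter_add_sum_filter_not (t.filter (fun n => ¬ p n)) q]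
        rw [Finset.sum_filter_add_sum_filter_not t p]
      -- betweenness for connectivity
      have hbetw : ∀ i j l : ℕ, i ∈ Finset.Ioc N M → l ∈ Finset.Ioc N M → i ≤ j → j ≤ l →
          j ∈ Finset.Ioc N M ∧
          ((f' i ≤ f' j ∧ f' j ≤ f' l) ∨ (f' l ≤ f' j ∧ f' j ≤ f' i)) := by
        intro i j l hi hl hij hjl
        have hjm : j ∈ Finset.Ioc N M := by
          rw [Finset.mem_Ioc] at hi hl ⊢
          omega
        refine ⟨hjm, ?_⟩
        have hir : (i:ℝ) ≤ (j:ℝ) := by exact_mod_cast hij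
        have hjr : (j:ℝ) ≤ (l:ℝ) := by exact_mod_cast hjl
        rcases hmono with hm | hm
        · exact Or.inl ⟨hm (hmemIcc i hi) (hmemIcc j hjm) hir,
            hm (hmemIcc j hjm) (hmemIcc l hl) hjr⟩
        · exact Or.inr ⟨hm (hmemIcc j hjm) (hmemIcc l hl) hjr,
            hm (hmemIcc i hi) (hmemIcc j hjm) hir⟩
      -- piece 1 : f' ≤ k - δ  (requires k ≥ 1; for k = 0 it is empty)
      have hb1 : ‖∑ n ∈ t.filter p, eexp (f n)‖ ≤ 2 + 1/δ := by
        rcases Nat.eq_zero_or_pos k with rfl | hk1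
        · have : t.filter p = ∅ := by
            apply Finset.filter_false_of_mem
            intro n hn
            have hpos := hf'pos n (hmemIcc n (hts hn))
            rw [hpdef]
            push_cast
            intro hcon
            linarith
          rw [this]
          simp only [Finset.sum_empty, norm_zero]
          positivity
        · apply kl_piece a b f f' N M haN hMb hdf hmono hmemIcc
            (t.filter p) ((Finset.filter_subset _ _).trans hts)
            ?conn δ hδ hδ2 (k-1) ?cond
          case conn =>
            intro i j l hi hl hij hjl
            have hi' : i ∈ t := (Finset.filter_subset _ _) hi
            have hl' : l ∈ t := (Finset.filter_subset _ _) hl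
            have hif := (Finset.mem_filter.mp hi).2
            have hlf := (Finset.mem_filter.mp hl).2
            obtain ⟨hjm, hbet⟩ := hbetw i j l (hts hi') (hts hl') hij hjl
            have hit := hchar i hi'
            have hlt := hchar l hl'
            have hjt : j ∈ t := by
              rw [htdef, Finset.mem_filter]
              refine ⟨hjm, ?_⟩
              rw [hkeydef]
              have hpos := hf'pos j (hmemIcc j hjm)
              rw [Nat.floor_eq_iff (by linarith : (0:ℝ) ≤ f' j + 1/2)]
              have hiv := hchar i hi'
              have hlv := hchar l hl'
              constructor
              · rcases hbet with ⟨h1, _⟩ | ⟨h1, _⟩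
                · linarith [hiv.1]
                · linarith [hlv.1]
              · push_cast
                rcases hbet with ⟨_, h2⟩ | ⟨_, h2⟩
                · linarith [hlv.2]
                · linarith [hiv.2]
            rw [Finset.mem_filter]
            refine ⟨hjt, ?_⟩
            rw [hpdef]
            rcases hbet with ⟨_, h2⟩ | ⟨_, h2⟩
            · exact le_trans h2 hlf
            · exact le_trans h2 hif
          case cond =>
            intro n hn
            have hn' : n ∈ t := (Finset.filter_subset _ _) hn
            have hch := hchar n hn'
            have hpn := (Finset.mem_filter.mp hn).2
            have hkc : ((k-1:ℕ):ℝ) = (k:ℝ) - 1 := by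
              push_cast [hk1]
              ring
            rw [hkc]
            constructor
            · linarith [hch.1]
            · have : f' n ≤ (k:ℝ) - δ := hpn
              linarith
      -- piece 3 : k + δ ≤ f'
      have hb3 : ‖∑ n ∈ (t.filter (fun n => ¬ p n)).filter q, eexp (f n)‖ ≤ 2 + 1/δ := by
        apply kl_piece a b f f' N M haN hMb hdf hmono hmemIcc
          ((t.filter (fun n => ¬ p n)).filter q)
          (((Finset.filter_subset _ _).trans (Finset.filter_subset _ _)).trans hts)
          ?conn3 δ hδ hδ2 k ?cond3
        case conn3 =>
          intro i j l hi hl hij hjl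
          have hi' : i ∈ t := (Finset.filter_subset _ _) ((Finset.filter_subset _ _) hi)
          have hl' : l ∈ t := (Finset.filter_subset _ _) ((Finset.filter_subset _ _) hl)
          have hiq := (Finset.mem_filter.mp hi).2
          have hlq := (Finset.mem_filter.mp hl).2
          have hinp := (Finset.mem_filter.mp ((Finset.filter_subset _ _) hi)).2
          have hlnp := (Finset.mem_filter.mp ((Finset.filter_subset _ _) hl)).2
          obtain ⟨hjm, hbet⟩ := hbetw i j l (hts hi') (hts hl') hij hjl
          have hit := hchar i hi'
          have hlt := hchar l hl'
          have hjt : j ∈ t := by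
            rw [htdef, Finset.mem_filter]
            refine ⟨hjm, ?_⟩
            rw [hkeydef]
            have hpos := hf'pos j (hmemIcc j hjm)
            rw [Nat.floor_eq_iff (by linarith : (0:ℝ) ≤ f' j + 1/2)]
            constructor
            · rcases hbet with ⟨h1, _⟩ | ⟨h1, _⟩
              · linarith [hit.1]
              · linarith [hlt.1]
            · push_cast
              rcases hbet with ⟨_, h2⟩ | ⟨_, h2⟩
              · linarith [hlt.2]
              · linarith [hit.2]
          rw [Finset.mem_filter]
          constructor
          · rw [Finset.mem_filter]
            refine ⟨hjt, ?_⟩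
            rw [hpdef]
            push_neg
            rcases hbet with ⟨h1, _⟩ | ⟨h1, _⟩
            · have : (k:ℝ) + δ ≤ f' i := hiq
              linarith
            · have : (k:ℝ) + δ ≤ f' l := hlq
              linarith
          · rw [hqdef]
            rcases hbet with ⟨h1, _⟩ | ⟨h1, _⟩
            · exact le_trans hiq h1
            · exact le_trans hlq h1
        case cond3 =>
          intro n hn
          have hn' : n ∈ t := (Finset.filter_subset _ _) ((Finset.filter_subset _ _) hn)
          have hch := hchar n hn'
          have hqn : (k:ℝ) + δ ≤ f' n := (Finset.mem_filter.mp hn).2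
          exact ⟨hqn, by linarith [hch.2]⟩
      -- piece 2 : middle
      have hb2' : ‖∑ n ∈ (t.filter (fun n => ¬ p n)).filter (fun n => ¬ q n), eexp (f n)‖
          ≤ 2*δ/m₀ + 1 := by
        have hcard := mid_piece a b f' f'' N M hdf' m₀ hm₀
          (fun x hx => hf''b x hx) hmemIcc
          ((t.filter (fun n => ¬ p n)).filter (fun n => ¬ q n))
          (((Finset.filter_subset _ _).trans (Finset.filter_subset _ _)).trans hts)
          ?conn2 (k:ℝ) δ hδ ?cond2
        · exact le_trans (triv_bound f _) hcard
        case conn2 =>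
          intro i j l hi hl hij hjl
          have hi' : i ∈ t := (Finset.filter_subset _ _) ((Finset.filter_subset _ _) hi)
          have hl' : l ∈ t := (Finset.filter_subset _ _) ((Finset.filter_subset _ _) hl)
          have hinq := (Finset.mem_filter.mp hi).2
          have hlnq := (Finset.mem_filter.mp hl).2
          have hinp := (Finset.mem_filter.mp ((Finset.filter_subset _ _) hi)).2
          have hlnp := (Finset.mem_filter.mp ((Finset.filter_subset _ _) hl)).2
          obtain ⟨hjm, hbet⟩ := hbetw i j l (hts hi') (hts hl') hij hjl
          have hit := hchar i hi'
          have hlt := hchar l hl'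
          have hinp' : (k:ℝ) - δ < f' i := by
            rw [hpdef] at hinp
            push_neg at hinp
            linarith
          have hlnp' : (k:ℝ) - δ < f' l := by
            rw [hpdef] at hlnp
            push_neg at hlnp
            linarith
          have hinq' : f' i < (k:ℝ) + δ := by
            rw [hqdef] at hinq
            push_neg at hinq
            linarith
          have hlnq' : f' l < (k:ℝ) + δ := by
            rw [hqdef] at hlnq
            push_neg at hlnq
            linarith
          have hjt : j ∈ t := by
            rw [htdef, Finset.mem_filter]
            refine ⟨hjm, ?_⟩
            rw [hkeydef]
            have hpos := hf'pos j (hmemIcc j hjm)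
            rw [Nat.floor_eq_iff (by linarith : (0:ℝ) ≤ f' j + 1/2)]
            constructor
            · rcases hbet with ⟨h1, _⟩ | ⟨h1, _⟩
              · linarith [hit.1]
              · linarith [hlt.1]
            · push_cast
              rcases hbet with ⟨_, h2⟩ | ⟨_, h2⟩
              · linarith [hlt.2]
              · linarith [hit.2]
          rw [Finset.mem_filter]
          constructor
          · rw [Finset.mem_filter]
            refine ⟨hjt, ?_⟩
            rw [hpdef]
            push_neg
            rcases hbet with ⟨h1, _⟩ | ⟨h1, _⟩
            · linarith
            · linarith
          · rw [hqdef]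
            push_neg
            rcases hbet with ⟨_, h2⟩ | ⟨_, h2⟩
            · linarith
            · linarith
        case cond2 =>
          intro n hn
          have hnp := (Finset.mem_filter.mp ((Finset.filter_subset _ _) hn)).2
          have hnq := (Finset.mem_filter.mp hn).2
          rw [hpdef] at hnp
          rw [hqdef] at hnq
          push_neg at hnp hnq
          exact ⟨by linarith, by linarith⟩
      rw [hsum3]
      calc ‖(∑ n ∈ t.filter p, eexp (f n)) +
          ((∑ n ∈ (t.filter (fun n => ¬ p n)).filter q, eexp (f n)) +
           (∑ n ∈ (t.filter (fun n => ¬ p n)).filter (fun n => ¬ q n), eexp (f n)))‖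
          ≤ ‖∑ n ∈ t.filter p, eexp (f n)‖ +
            (‖∑ n ∈ (t.filter (fun n => ¬ p n)).filter q, eexp (f n)‖ +
             ‖∑ n ∈ (t.filter (fun n => ¬ p n)).filter (fun n => ¬ q n), eexp (f n)‖) := by
            refine le_trans (norm_add_le _ _) ?_
            have := norm_add_le (∑ n ∈ (t.filter (fun n => ¬ p n)).filter q, eexp (f n))
              (∑ n ∈ (t.filter (fun n => ¬ p n)).filter (fun n => ¬ q n), eexp (f n))
            linarith
      _ ≤ (2 + 1/δ) + ((2 + 1/δ) + (2*δ/m₀ + 1)) := by linarith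
      _ = B := by rw [hBdef]; ring
    -- sum over fibers
    have htotal : ‖∑ n ∈ Finset.Ioc N M, eexp (f n)‖ ≤ ((K₀:ℝ)+1) * B := by
      rw [← hdecomp]
      calc ‖∑ k ∈ Finset.range (K₀+1), ∑ n ∈ (Finset.Ioc N M).filter (fun n => key n = k), eexp (f n)‖
          ≤ ∑ k ∈ Finset.range (K₀+1), ‖∑ n ∈ (Finset.Ioc N M).filter (fun n => key n = k), eexp (f n)‖ :=
            norm_sum_le _ _
      _ ≤ ∑ k ∈ Finset.range (K₀+1), B := Finset.sum_le_sum hfiber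
      _ = ((K₀:ℝ)+1) * B := by
          rw [Finset.sum_const, Finset.card_range]
          push_cast
          ring
    -- final arithmetic
    have hK₀le : ((K₀:ℝ)) ≤ c₂*lam + 1/2 := Nat.floor_le (by positivity)
    have hδinv : 1/δ = 2*v/u := by
      rw [hδdef]
      rw [one_div_div]
    have hmid2 : 2*δ/m₀ = v/(c₃*u) := by
      rw [hδdef, hm₀def, ← hu2, ← hv2]
      field_simp
    have hBval : B = 5 + 4*(v/u) + (1/c₃)*(v/u) := by
      rw [hBdef, show (2:ℝ)/δ = 2*(1/δ) by ring, hδinv, hmid2]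
      field_simp
      ring
    have hBpos : 0 ≤ B := by
      rw [hBval]
      positivity
    have hK₀1 : ((K₀:ℝ)+1) ≤ 4*c₂*lam := by nlinarith
    have hut : u^2 * (v/u) = u*v := by
      field_simp
    calc ‖∑ n ∈ Finset.Ioc N M, eexp (f n)‖ ≤ ((K₀:ℝ)+1) * B := htotal
    _ ≤ (4*c₂*lam) * (5 + 4*(v/u) + (1/c₃)*(v/u)) := by
        rw [hBval] at hBpos ⊢
        apply mul_le_mul hK₀1 le_rfl hBpos (by positivity)
    _ = 20*c₂*u^2 + (16*c₂ + 4*c₂/c₃) * (u^2*(v/u)) := by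
        rw [← hu2]
        ring
    _ = 20*c₂*u^2 + (16*c₂ + 4*c₂/c₃) * (u*v) := by rw [hut]
    _ ≤ 20*c₂*(u*v) + (16*c₂ + 4*c₂/c₃) * (u*v) := by
        have huu : u^2 ≤ u*v := by nlinarith
        nlinarith
    _ = (36*c₂ + 4*c₂/c₃) * (v*u) := by ring
    _ = (36*c₂ + 4*c₂/c₃) * (Real.sqrt a * Real.sqrt lam) := by rw [hudef, hvdef]
  -- combine
  have hd1 : (0:ℝ) < 1/c₁ := by positivity
  have hd2 : (0:ℝ) < 1/c₂ := by positivity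
  have hd3 : (0:ℝ) < c₂/c₃ := by positivity
  have ht : (0:ℝ) < lam⁻¹ := by positivity
  have hpart2 : c₂ * lam ≤ 1/2 → ‖∑ n ∈ Finset.Ioc N M, eexp (f n)‖ ≤ K * lam⁻¹ := by
    intro hsm
    have h := hsmall hsm
    have hinv : 2*c₂ ≤ lam⁻¹ := by
      rw [← one_div, le_div_iff₀ hlam]
      nlinarith
    have h1 : 1/(c₁*lam) = (1/c₁)*lam⁻¹ := by
      rw [one_div, mul_inv, one_div]
    rw [h1] at h
    have hK1 : 1/c₁ + 1/c₂ ≤ K := by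
      rw [hKdef]
      nlinarith [hd1, hd2, hd3, hc₂]
    calc ‖∑ n ∈ Finset.Ioc N M, eexp (f n)‖ ≤ 2 + (1/c₁)*lam⁻¹ := h
    _ ≤ (1/c₂)*lam⁻¹ + (1/c₁)*lam⁻¹ := by
        have h2 : (2:ℝ) ≤ (1/c₂)*lam⁻¹ := by
          have h3 := mul_le_mul_of_nonneg_left hinv (le_of_lt hd2)
          have hcc : (1/c₂)*(2*c₂) = 2 := by field_simp
          rw [hcc] at h3
          linarith
        linarith
    _ = (1/c₁ + 1/c₂)*lam⁻¹ := by ring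
    _ ≤ K * lam⁻¹ := mul_le_mul_of_nonneg_right hK1 ht.le
  have hsq : (0:ℝ) ≤ Real.sqrt a * Real.sqrt lam := by positivity
  constructor
  · rcases le_or_gt (c₂*lam) (1/2) with hsm | hbig
    · have h := hpart2 hsm
      calc ‖∑ n ∈ Finset.Ioc N M, eexp (f n)‖ ≤ K * lam⁻¹ := h
      _ ≤ K * (Real.sqrt a * Real.sqrt lam + lam⁻¹) := by nlinarith
    · rcases le_or_gt lam a with hla | hla
      · have h := hsplit hbig hla
        have hc : 36*c₂ + 4*c₂/c₃ ≤ K := by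
          rw [hKdef, show 36*c₂ + 4*c₂/c₃ = 36*c₂ + 4*(c₂/c₃) by ring]
          nlinarith [hd1, hd2, hd3, hc₂]
        calc ‖∑ n ∈ Finset.Ioc N M, eexp (f n)‖
            ≤ (36*c₂ + 4*c₂/c₃) * (Real.sqrt a * Real.sqrt lam) := h
        _ ≤ K * (Real.sqrt a * Real.sqrt lam) := mul_le_mul_of_nonneg_right hc hsq
        _ ≤ K * (Real.sqrt a * Real.sqrt lam + lam⁻¹) := by nlinarith
      · have h2a : 2*a ≤ 2*(Real.sqrt a * Real.sqrt lam) := by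
          have h1 : Real.sqrt a * Real.sqrt a = a := Real.mul_self_sqrt ha0.le
          have h2 : Real.sqrt a ≤ Real.sqrt lam := Real.sqrt_le_sqrt hla.le
          nlinarith [Real.sqrt_nonneg a]
        have hc : (2:ℝ) ≤ K := by
          rw [hKdef]
          nlinarith [hd1, hd2, hd3, hc₂]
        calc ‖∑ n ∈ Finset.Ioc N M, eexp (f n)‖ ≤ 2*a := htriv
        _ ≤ 2*(Real.sqrt a * Real.sqrt lam) := h2a
        _ ≤ K*(Real.sqrt a * Real.sqrt lam) := mul_le_mul_of_nonneg_right hc hsq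
        _ ≤ K * (Real.sqrt a * Real.sqrt lam + lam⁻¹) := by nlinarith
  · exact hpart2

lemma eexp_neg (x : ℝ) : eexp (-x) = (starRingEnd ℂ) (eexp x) := by
  unfold eexp
  rw [← Complex.exp_conj]
  congr 1
  rw [show 2 * (Real.pi:ℂ) * Complex.I * (x:ℝ) = ((2*Real.pi*x : ℝ):ℂ) * Complex.I by
    push_cast; ring]
  rw [map_mul, Complex.conj_I, Complex.conj_ofReal]
  push_cast
  ring

theorem van_der_corput_second_derivative (c₁ c₂ c₃ c₄ : ℝ)
    (hc₁ : 0 < c₁) (hc₂ : 0 < c₂) (hc₃ : 0 < c₃) (hc₄ : 0 < c₄) :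
    ∃ K > (0 : ℝ), ∀ (a b : ℝ) (f f' f'' : ℝ → ℝ) (lam : ℝ),
      1 ≤ a → a < b → b ≤ 2 * a → 0 < lam →
      (∀ x ∈ Set.Icc a b, HasDerivAt f (f' x) x) →
      (∀ x ∈ Set.Icc a b, HasDerivAt f' (f'' x) x) →
      ContinuousOn f'' (Set.Icc a b) →
      (∀ x ∈ Set.Icc a b, c₁ * lam ≤ |f' x| ∧ |f' x| ≤ c₂ * lam) →
      (∀ x ∈ Set.Icc a b, c₃ * lam / a ≤ |f'' x| ∧ |f'' x| ≤ c₄ * lam / a) →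
      (‖∑ n ∈ Finset.Ioc ⌊a⌋₊ ⌊b⌋₊, eexp (f n)‖ ≤
          K * (a ^ ((1 : ℝ) / 2) * lam ^ ((1 : ℝ) / 2) + lam⁻¹)) ∧
      (c₂ * lam ≤ 1 / 2 →
        ‖∑ n ∈ Finset.Ioc ⌊a⌋₊ ⌊b⌋₊, eexp (f n)‖ ≤ K * lam⁻¹) := by
  refine ⟨40 * (1 + c₂ + c₂/c₃ + 1/c₁ + 1/c₂), by positivity, ?_⟩
  intro a b f f' f'' lam ha hab hb2 hlam hdf hdf' hf''c hf'b hf''b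
  have ha0 : (0:ℝ) < a := by linarith
  have hrpow : a ^ ((1:ℝ)/2) * lam ^ ((1:ℝ)/2) = Real.sqrt a * Real.sqrt lam := by
    rw [Real.sqrt_eq_rpow, Real.sqrt_eq_rpow]
  rw [hrpow]
  -- f' has constant sign
  have hf'cont : ContinuousOn f' (Set.Icc a b) := fun x hx =>
    ((hdf' x hx).continuousAt).continuousWithinAt
  have hf'ne : ∀ x ∈ Set.Icc a b, f' x ≠ 0 := by
    intro x hx h0
    have := (hf'b x hx).1
    rw [h0] at this
    simp only [abs_zero] at this
    nlinarith
  rcases sign_const f' a b hf'cont hf'ne with hpos | hneg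
  · apply main_pos c₁ c₂ c₃ hc₁ hc₂ hc₃ a b f f' f'' lam ha hab hb2 hlam hdf hdf' hf''c hpos
    · intro x hx
      have h := hf'b x hx
      rw [abs_of_pos (hpos x hx)] at h
      exact h
    · intro x hx
      exact (hf''b x hx).1
  · -- negative case: conjugate
    have hmain := main_pos c₁ c₂ c₃ hc₁ hc₂ hc₃ a b (fun x => -f x) (fun x => -f' x)
      (fun x => -f'' x) lam ha hab hb2 hlam
      (fun x hx => (hdf x hx).neg)
      (fun x hx => (hdf' x hx).neg)
      (hf''c.neg)
      (fun x hx => by simp only [neg_pos]; exact hneg x hx)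
      (fun x hx => by
        have h := hf'b x hx
        rw [abs_of_neg (hneg x hx)] at h
        exact ⟨h.1, h.2⟩)
      (fun x hx => by
        simp only [abs_neg]
        exact (hf''b x hx).1)
    have hnorm : ‖∑ n ∈ Finset.Ioc ⌊a⌋₊ ⌊b⌋₊, eexp ((fun x => -f x) n)‖
        = ‖∑ n ∈ Finset.Ioc ⌊a⌋₊ ⌊b⌋₊, eexp (f n)‖ := by
      have hconj : ∑ n ∈ Finset.Ioc ⌊a⌋₊ ⌊b⌋₊, eexp ((fun x => -f x) n)
          = (starRingEnd ℂ) (∑ n ∈ Finset.Ioc ⌊a⌋₊ ⌊b⌋₊, eexp (f n)) := by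
        rw [map_sum]
        apply Finset.sum_congr rfl
        intro n _
        exact eexp_neg (f n)
      rw [hconj, RCLike.norm_conj]
    rw [hnorm] at hmain
    exact hmain
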